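/- arXiv:2502.10030 — 2 statements merged into one kernel-verified Lean document; each statement's English description precedes it below -/
import Mathlib

section
/- If two beliefs β (a density matrix on S⊗R₁) and γ (a density matrix on S⊗R₂) are equivalent, then their marginals on S coincide: Tr_{R₁}[β] = Tr_{R₂}[γ]. -/
open Matrix
open scoped Kronecker ComplexOrder


open Classical in
/-- The positive semidefinite square root of a matrix (zero if not PSD). -/
noncomputable def msqrt {n : Type*} [Fintype n] [DecidableEq n] (A : Matrix n n ℂ) :
    Matrix n n ℂ :=
  if h : A.PosSemidef then
    h.1.eigenvectorUnitary.1 * diagonal ((↑) ∘ (√·) ∘ h.1.eigenvalues) *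
      (star h.1.eigenvectorUnitary : Matrix n n ℂ) else 0

/-- `A^{-1/2}`: the (nonsingular) inverse of the PSD square root. -/
noncomputable def invsqrt {n : Type*} [Fintype n] [DecidableEq n] (A : Matrix n n ℂ) :
    Matrix n n ℂ :=
  (msqrt A)⁻¹

/-- Partial trace over the second factor `R`. -/
noncomputable def ptraceR {S R : Type*} [Fintype R] (M : Matrix (S × R) (S × R) ℂ) : Matrix S S ℂ :=
  Matrix.of fun s s' => ∑ r, M (s, r) (s', r)

/-- A density matrix: positive semidefinite with unit trace. -/
def IsDensity {n : Type*} [Fintype n] (A : Matrix n n ℂ) : Prop :=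
  A.PosSemidef ∧ A.trace = 1

/-- The Choi matrix of a linear map between matrix algebras. -/
def choi {S T : Type*} [Fintype S] [DecidableEq S]
    (E : Matrix S S ℂ →ₗ[ℂ] Matrix T T ℂ) : Matrix (S × T) (S × T) ℂ :=
  Matrix.of fun p q => E (Matrix.single p.1 q.1 1) p.2 q.2

/-- Completely positive trace-preserving map. -/
def IsCPTP {S T : Type*} [Fintype S] [DecidableEq S] [Fintype T]
    (E : Matrix S S ℂ →ₗ[ℂ] Matrix T T ℂ) : Prop :=
  (∀ X, (E X).trace = X.trace) ∧ (choi E).PosSemidef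

/-- The Hilbert-Schmidt adjoint `E†`, satisfying `Tr[E(X)† Y] = Tr[X† E†(Y)]`. -/
noncomputable def adjMap {S T : Type*} [Fintype S] [DecidableEq S] [Fintype T]
    (E : Matrix S S ℂ →ₗ[ℂ] Matrix T T ℂ) (Y : Matrix T T ℂ) : Matrix S S ℂ :=
  Matrix.of fun i j => ((E (Matrix.single i j 1))ᴴ * Y).trace

/-- The original Petz map `R^{E,βS}(σ) = √βS E†(E(βS)^{-1/2} σ E(βS)^{-1/2}) √βS`. -/
noncomputable def petz {S T : Type*} [Fintype S] [DecidableEq S] [Fintype T] [DecidableEq T]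
    (E : Matrix S S ℂ →ₗ[ℂ] Matrix T T ℂ) (βS : Matrix S S ℂ) (σ : Matrix T T ℂ) :
    Matrix S S ℂ :=
  msqrt βS * adjMap E (invsqrt (E βS) * σ * invsqrt (E βS)) * msqrt βS

/-- The prior-extended Petz map `R^{E⊗Tr,β}`. -/
noncomputable def petzExt {S R T : Type*} [Fintype S] [DecidableEq S]
    [Fintype R] [DecidableEq R] [Fintype T] [DecidableEq T]
    (E : Matrix S S ℂ →ₗ[ℂ] Matrix T T ℂ) (β : Matrix (S × R) (S × R) ℂ)
    (σ : Matrix T T ℂ) : Matrix (S × R) (S × R) ℂ :=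
  msqrt β *
    (adjMap E (invsqrt (E (ptraceR β)) * σ * invsqrt (E (ptraceR β))) ⊗ₖ (1 : Matrix R R ℂ)) *
    msqrt β

/-- The retrodiction map `R_ext^{E,β} = Tr_R ∘ R^{E⊗Tr,β}`. -/
noncomputable def retroExt {S R T : Type*} [Fintype S] [DecidableEq S]
    [Fintype R] [DecidableEq R] [Fintype T] [DecidableEq T]
    (E : Matrix S S ℂ →ₗ[ℂ] Matrix T T ℂ) (β : Matrix (S × R) (S × R) ℂ)
    (σ : Matrix T T ℂ) : Matrix S S ℂ :=
  ptraceR (petzExt E β σ)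

/-- Two beliefs are equivalent if they induce the same retrodiction map for all channels. -/
def EquivBeliefs {S R₁ R₂ : Type*} [Fintype S] [DecidableEq S]
    [Fintype R₁] [DecidableEq R₁] [Fintype R₂] [DecidableEq R₂]
    (β : Matrix (S × R₁) (S × R₁) ℂ) (γ : Matrix (S × R₂) (S × R₂) ℂ) : Prop :=
  ∀ (T : Type) (_ : Fintype T) (_ : DecidableEq T)
    (E : Matrix S S ℂ →ₗ[ℂ] Matrix T T ℂ),
    IsCPTP E → (E (ptraceR β)).PosDef → (E (ptraceR γ)).PosDef →
    ∀ σ : Matrix T T ℂ, retroExt E β σ = retroExt E γ σ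


-- Auxiliary lemmas and definitions

lemma msqrt_of_posSemidef {n : Type*} [Fintype n] [DecidableEq n] {A : Matrix n n ℂ}
    (hA : A.PosSemidef) : msqrt A = hA.1.eigenvectorUnitary.1 *
      diagonal ((↑) ∘ (√·) ∘ hA.1.eigenvalues) * (star hA.1.eigenvectorUnitary : Matrix n n ℂ) := by
  simp [msqrt, hA]

lemma msqrt_mul_self {n : Type*} [Fintype n] [DecidableEq n] {A : Matrix n n ℂ}
    (hA : A.PosSemidef) : msqrt A * msqrt A = A := by
  rw [msqrt_of_posSemidef hA]
  conv_rhs => rw [hA.1.spectral_theorem, Unitary.conjStarAlgAut_apply]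
  have hU : (star hA.1.eigenvectorUnitary : Matrix n n ℂ) * hA.1.eigenvectorUnitary.1 = 1 :=
    Unitary.coe_star_mul_self _
  rw [show ∀ a b c d e f : Matrix n n ℂ, a * b * c * (d * e * f) = a * (b * (c * d) * e) * f from
    fun a b c d e f => by simp only [Matrix.mul_assoc], hU, Matrix.mul_one, diagonal_mul_diagonal]
  congr 3
  funext i
  simp only [Function.comp_apply]
  rw [← Complex.ofReal_mul, Real.mul_self_sqrt (hA.eigenvalues_nonneg i)]
  rfl

lemma msqrt_one {n : Type*} [Fintype n] [DecidableEq n] :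
    msqrt (1 : Matrix n n ℂ) = 1 := by
  rw [msqrt_of_posSemidef Matrix.PosSemidef.one]
  have hD := (Matrix.PosSemidef.one (n := n) (R := ℂ)).1.conjStarAlgAut_star_eigenvectorUnitary
  rw [map_one] at hD
  have he : ∀ i, (Matrix.PosSemidef.one (n := n) (R := ℂ)).1.eigenvalues i = 1 := by
    intro i
    have := congrFun (congrFun hD i) i
    simp only [diagonal_apply_eq, one_apply_eq, Function.comp_apply] at this
    have h3 := congrArg (RCLike.re (K := ℂ)) this
    simpa using h3.symm
  have hD2 : diagonal (((↑) : ℝ → ℂ) ∘ (√·) ∘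
      (Matrix.PosSemidef.one (n := n) (R := ℂ)).1.eigenvalues) = 1 := by
    ext i j
    simp [diagonal_apply, one_apply, he]
  rw [hD2, Matrix.mul_one]
  exact Unitary.coe_mul_star_self _

lemma invsqrt_one {n : Type*} [Fintype n] [DecidableEq n] :
    invsqrt (1 : Matrix n n ℂ) = 1 := by
  rw [invsqrt, msqrt_one, inv_one]

lemma trace_ptraceR {S R : Type*} [Fintype S] [Fintype R]
    (M : Matrix (S × R) (S × R) ℂ) : (ptraceR M).trace = M.trace := by
  simp [ptraceR, Matrix.trace, Matrix.diag, Fintype.sum_prod_type]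

/-- The completely depolarizing channel to a one-dimensional system. -/
noncomputable def trChan (S : Type*) [Fintype S] :
    Matrix S S ℂ →ₗ[ℂ] Matrix Unit Unit ℂ where
  toFun X := X.trace • 1
  map_add' X Y := by simp [add_smul]
  map_smul' c X := by simp [smul_smul]

lemma trChan_apply {S : Type*} [Fintype S] (X : Matrix S S ℂ) :
    trChan S X = X.trace • 1 := rfl

lemma trChan_cptp (S : Type*) [Fintype S] [DecidableEq S] : IsCPTP (trChan S) := by
  constructor
  · intro X
    simp [trChan_apply, Matrix.trace_smul, Matrix.trace_one]
  · have : choi (trChan S) = 1 := by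
      ext p q
      simp only [choi, trChan_apply, Matrix.of_apply, Matrix.smul_apply, Matrix.one_apply,
        smul_eq_mul]
      have h2 : p.2 = q.2 := Subsingleton.elim _ _
      rcases eq_or_ne p.1 q.1 with h | h
      · have hpq : p = q := Prod.ext h h2
        simp [hpq, Matrix.trace_single_eq_same]
      · have hpq : p ≠ q := fun hc => h (congrArg Prod.fst hc)
        simp [hpq, Matrix.trace_single_eq_of_ne (h := h)]
    rw [this]
    exact Matrix.PosSemidef.one

lemma adjMap_trChan_one {S : Type*} [Fintype S] [DecidableEq S] :
    adjMap (trChan S) (1 : Matrix Unit Unit ℂ) = 1 := by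
  ext i j
  simp only [adjMap, Matrix.of_apply, trChan_apply, mul_one, Matrix.one_apply]
  rcases eq_or_ne i j with h | h
  · subst h
    simp [Matrix.trace_single_eq_same, Matrix.trace_conjTranspose, Matrix.trace_smul,
      Matrix.trace_one]
  · simp [h, Matrix.trace_single_eq_of_ne (h := h), Matrix.trace_conjTranspose,
      Matrix.trace_smul]

lemma retroExt_trChan {S R : Type*} [Fintype S] [DecidableEq S] [Fintype R] [DecidableEq R]
    (β : Matrix (S × R) (S × R) ℂ) (hβ : IsDensity β) :
    retroExt (trChan S) β 1 = ptraceR β := by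
  have htr : trChan S (ptraceR β) = 1 := by
    rw [trChan_apply, trace_ptraceR, hβ.2, one_smul]
  rw [retroExt, petzExt, htr, invsqrt_one, one_mul, mul_one, adjMap_trChan_one,
    Matrix.one_kronecker_one, mul_one, msqrt_mul_self hβ.1]


/-- Equivalent beliefs have equal marginals on `S`. -/
theorem equiv_beliefs_marginals_eq
    {S R₁ R₂ : Type*} [Fintype S] [DecidableEq S]
    [Fintype R₁] [DecidableEq R₁] [Fintype R₂] [DecidableEq R₂]
    (β : Matrix (S × R₁) (S × R₁) ℂ) (γ : Matrix (S × R₂) (S × R₂) ℂ)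
    (hβ : IsDensity β) (hγ : IsDensity γ)
    (h : EquivBeliefs β γ) :
    ptraceR β = ptraceR γ := by
  have h1 : (trChan S (ptraceR β)).PosDef := by
    rw [trChan_apply, trace_ptraceR, hβ.2, one_smul]; exact Matrix.PosDef.one
  have h2 : (trChan S (ptraceR γ)).PosDef := by
    rw [trChan_apply, trace_ptraceR, hγ.2, one_smul]; exact Matrix.PosDef.one
  have key := h Unit inferInstance (fun a b => inferInstance) (trChan S) (trChan_cptp S) h1 h2 1
  rwa [retroExt_trChan β hβ, retroExt_trChan γ hγ] at key
end

section
/- Certainty is immune to updates: let β = |Ψ⟩⟨Ψ| be a pure belief on S⊗R (|Ψ⟩ a unit vector), with marginal β_S := Tr_R[β]. Then for every CPTP map E from S to T with E(β_S) positive definite and every density matrix σ on T, the prior-extended Petz map returns the prior: R^{E⊗Tr,β}(σ) = β, and consequently the retrodiction map satisfies R_ext^{E,β}(σ) = β_S. -/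
open Matrix
open scoped Kronecker ComplexOrder


section AuxLemmas

open Finset in
lemma psd_vecMulVec' {n : Type*} [Fintype n] (Ψ : n → ℂ) :
    (Matrix.vecMulVec Ψ (star Ψ)).PosSemidef := by
  exact Matrix.posSemidef_vecMulVec_self_star Ψ

lemma msqrt_eq_cfc' {n : Type*} [Fintype n] [DecidableEq n] (A : Matrix n n ℂ)
    (h : A.PosSemidef) : msqrt A = cfc Real.sqrt A := by
  rw [msqrt, dif_pos h, h.1.cfc_eq, Matrix.IsHermitian.cfc, Unitary.conjStarAlgAut_apply]
  rfl

lemma dot_one' {n : Type*} [Fintype n] (Ψ : n → ℂ)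
    (hΨ : ∑ p, Complex.normSq (Ψ p) = 1) :
    ∑ p, (starRingEnd ℂ) (Ψ p) * Ψ p = 1 := by
  have h : ∀ p : n, (starRingEnd ℂ) (Ψ p) * Ψ p = ((Complex.normSq (Ψ p) : ℝ) : ℂ) := by
    intro p; rw [Complex.normSq_eq_conj_mul_self]
  rw [Finset.sum_congr rfl (fun p _ => h p), ← Complex.ofReal_sum]
  norm_cast

lemma vmv_mul_vmv' {n : Type*} [Fintype n] (Ψ : n → ℂ)
    (hΨ : ∑ p, Complex.normSq (Ψ p) = 1) :
    Matrix.vecMulVec Ψ (star Ψ) * Matrix.vecMulVec Ψ (star Ψ)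
      = Matrix.vecMulVec Ψ (star Ψ) := by
  ext i j
  simp only [Matrix.mul_apply, Matrix.vecMulVec_apply, Pi.star_apply, RCLike.star_def]
  calc ∑ k, Ψ i * (starRingEnd ℂ) (Ψ k) * (Ψ k * (starRingEnd ℂ) (Ψ j))
      = (Ψ i * (starRingEnd ℂ) (Ψ j)) * ∑ k, (starRingEnd ℂ) (Ψ k) * Ψ k := by
        rw [Finset.mul_sum]; exact Finset.sum_congr rfl (fun k _ => by ring)
    _ = Ψ i * (starRingEnd ℂ) (Ψ j) := by rw [dot_one' Ψ hΨ, mul_one]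

lemma trace_adjMap_mul {S T : Type*} [Fintype S] [DecidableEq S] [Fintype T]
    (E : Matrix S S ℂ →ₗ[ℂ] Matrix T T ℂ) (Y : Matrix T T ℂ) (M : Matrix S S ℂ) :
    (adjMap E Y * M).trace = ((E Mᴴ)ᴴ * Y).trace := by
  have hM : E Mᴴ = ∑ i : S, ∑ j : S,
      (starRingEnd ℂ) (M j i) • E (Matrix.single i j 1) := by
    conv_lhs => rw [Matrix.matrix_eq_sum_single Mᴴ]
    rw [map_sum]
    refine Finset.sum_congr rfl fun i _ => ?_
    rw [map_sum]
    refine Finset.sum_congr rfl fun j _ => ?_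
    rw [← _root_.map_smul]
    congr 1
    rw [Matrix.conjTranspose_apply, RCLike.star_def, Matrix.smul_single,
      smul_eq_mul, mul_one]
  have hR : ((E Mᴴ)ᴴ * Y).trace
      = ∑ i : S, ∑ j : S, M j i * ((E (Matrix.single i j 1))ᴴ * Y).trace := by
    rw [hM]
    simp [Matrix.conjTranspose_sum, Matrix.conjTranspose_smul, Finset.sum_mul,
      smul_mul_assoc, Matrix.trace_sum, Matrix.trace_smul, smul_eq_mul]
  have hL : (adjMap E Y * M).trace
      = ∑ i : S, ∑ j : S, ((E (Matrix.single i j 1))ᴴ * Y).trace * M j i := by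
    simp [Matrix.trace, Matrix.diag, Matrix.mul_apply, adjMap]
  rw [hL, hR]
  exact Finset.sum_congr rfl fun i _ => Finset.sum_congr rfl fun j _ => mul_comm _ _

lemma vmv_sandwich {S R : Type*} [Fintype S] [DecidableEq S] [Fintype R] [DecidableEq R]
    (Ψ : S × R → ℂ) (A : Matrix S S ℂ) :
    Matrix.vecMulVec Ψ (star Ψ) * (A ⊗ₖ (1 : Matrix R R ℂ)) * Matrix.vecMulVec Ψ (star Ψ)
      = (A * ptraceR (Matrix.vecMulVec Ψ (star Ψ))).trace • Matrix.vecMulVec Ψ (star Ψ) := by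
  ext ⟨s, r⟩ ⟨s', r'⟩
  simp only [Matrix.mul_apply, Matrix.vecMulVec_apply, Matrix.kroneckerMap_apply,
    Matrix.one_apply, Pi.star_apply, RCLike.star_def, Matrix.smul_apply, smul_eq_mul,
    Matrix.trace, Matrix.diag_apply, ptraceR, Matrix.of_apply, Fintype.sum_prod_type,
    mul_ite, mul_zero, ite_mul, zero_mul, Finset.sum_ite_eq, Finset.mem_univ, if_true,
    Finset.sum_ite_eq', Finset.mul_sum, Finset.sum_mul]
  conv_rhs => rw [Finset.sum_comm]
  refine Finset.sum_congr rfl fun c _ => ?_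
  rw [Finset.sum_comm]
  refine Finset.sum_congr rfl fun a _ => Finset.sum_congr rfl fun b _ => ?_
  ring

end AuxLemmas

/-- Certainty is immune to updates: for a pure belief
`β = |Ψ⟩⟨Ψ|`, the prior-extended Petz map returns the prior, and the
retrodiction map returns the marginal `β_S`. -/
theorem pure_belief_immune_to_update
    {S R T : Type*} [Fintype S] [DecidableEq S]
    [Fintype R] [DecidableEq R] [Fintype T] [DecidableEq T]
    (Ψ : S × R → ℂ) (hΨ : ∑ p, Complex.normSq (Ψ p) = 1)
    (E : Matrix S S ℂ →ₗ[ℂ] Matrix T T ℂ) (hE : IsCPTP E)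
    (hpd : (E (ptraceR (Matrix.vecMulVec Ψ (star Ψ)))).PosDef)
    (σ : Matrix T T ℂ) (hσ : IsDensity σ) :
    petzExt E (Matrix.vecMulVec Ψ (star Ψ)) σ = Matrix.vecMulVec Ψ (star Ψ) ∧
      retroExt E (Matrix.vecMulVec Ψ (star Ψ)) σ
        = ptraceR (Matrix.vecMulVec Ψ (star Ψ)) := by
  set β := Matrix.vecMulVec Ψ (star Ψ) with hβdef
  have hβ : β.PosSemidef := psd_vecMulVec' Ψ
  have hββ : β * β = β := vmv_mul_vmv' Ψ hΨ
  -- msqrt β = β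
  have hsq : msqrt β = β := by
    have hsa : IsSelfAdjoint β := hβ.1.isSelfAdjoint
    have hid : cfc (id : ℝ → ℝ) β = β := cfc_id ℝ β hsa
    have hsq' : cfc (fun x : ℝ => id x * id x) β = cfc (id : ℝ → ℝ) β := by
      rw [cfc_mul id id β, hid, hββ]
    have heq := (cfc_eq_cfc_iff_eqOn (a := β)).mp hsq'
    rw [msqrt_eq_cfc' β hβ]
    conv_rhs => rw [← hid]
    refine cfc_congr fun x hx => ?_
    have hx2 : x * x = x := heq hx
    have : x = 0 ∨ x = 1 := by
      have : x * (x - 1) = 0 := by linarith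
      rcases mul_eq_zero.mp this with h | h
      · exact Or.inl h
      · exact Or.inr (by linarith)
    rcases this with h | h <;> simp [h]
  -- notation for the channel output on the marginal
  set B := E (ptraceR β) with hBdef
  have hBpsd : B.PosSemidef := hpd.posSemidef
  have hmsB : msqrt B = cfc Real.sqrt B := msqrt_eq_cfc' B hBpsd
  have hsqrtB_mul : msqrt B * msqrt B = B := by
    have hsa : IsSelfAdjoint B := hBpsd.1.isSelfAdjoint
    rw [hmsB, ← cfc_mul Real.sqrt Real.sqrt B]
    conv_rhs => rw [← cfc_id ℝ B hsa]
    refine cfc_congr fun x hx => ?_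
    rw [hBpsd.1.spectrum_real_eq_range_eigenvalues] at hx
    obtain ⟨i, rfl⟩ := hx
    exact Real.mul_self_sqrt (hBpsd.eigenvalues_nonneg i)
  -- √B is invertible
  have hdet : IsUnit (msqrt B).det := by
    have h2 : (msqrt B).det * (msqrt B).det = B.det := by
      rw [← Matrix.det_mul, hsqrtB_mul]
    have hBdet : B.det ≠ 0 := ne_of_gt hpd.det_pos
    exact isUnit_iff_ne_zero.mpr (fun h0 => hBdet (by rw [← h2, h0, mul_zero]))
  have hNB : invsqrt B * B * invsqrt B = 1 := by
    calc invsqrt B * B * invsqrt B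
        = invsqrt B * (msqrt B * msqrt B) * invsqrt B := by rw [hsqrtB_mul]
      _ = (invsqrt B * msqrt B) * (msqrt B * invsqrt B) := by
          simp only [mul_assoc]
      _ = 1 := by
          rw [invsqrt, Matrix.nonsing_inv_mul _ hdet, Matrix.mul_nonsing_inv _ hdet, one_mul]
  set Y := invsqrt B * σ * invsqrt B with hYdef
  -- the marginal is Hermitian
  have hmarg : (ptraceR β)ᴴ = ptraceR β := by
    ext s s'
    simp only [Matrix.conjTranspose_apply, ptraceR, Matrix.of_apply, star_sum]
    refine Finset.sum_congr rfl fun r _ => ?_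
    simp [hβdef, Matrix.vecMulVec_apply, mul_comm]
  -- the key scalar is 1
  have hc : (adjMap E Y * ptraceR β).trace = 1 := by
    rw [trace_adjMap_mul, hmarg, ← hBdef, hpd.isHermitian.eq]
    have : B * Y = B * invsqrt B * σ * invsqrt B := by
      rw [hYdef]; simp only [mul_assoc]
    rw [this, Matrix.trace_mul_comm, ← mul_assoc, ← mul_assoc, hNB, one_mul]
    exact hσ.2
  have hmain : petzExt E β σ = β := by
    rw [petzExt, hsq, ← hBdef, ← hYdef, vmv_sandwich, hc, one_smul]
  exact ⟨hmain, by rw [retroExt, hmain]⟩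
end
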